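/- Over the field ℤ/2, a persistence module map φ : M → N between modules in barcode form M = ⨁_j I_{[a_j,b_j)}, N = ⨁_l I_{[c_l,d_l)} can be reconstructed from its graphcode together with the interval data: define φ_i on the i-th vector space by sending the basis vector of the j-th summand (when a_j ≤ i < b_j) to the sum of basis vectors of summands l with (j,l) an edge of the graphcode and c_l ≤ i < d_l; this collection of maps is a well-defined morphism of persistence modules equal to φ. -/

import Mathlib

/-- A one-parameter persistence module over the linear order `{1, …, n}`
(encoded by `Fin n`): vector spaces `V i` with structure maps `V i → V j` for
`i ≤ j`, functorially. -/
structure PersMod (k : Type) [Field k] (n : ℕ) where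
  V : Fin n → Type
  [acg : ∀ i, AddCommGroup (V i)]
  [mod : ∀ i, Module k (V i)]
  map : ∀ {i j : Fin n}, i ≤ j → (V i →ₗ[k] V j)
  map_id : ∀ i : Fin n, map (le_refl i) = LinearMap.id
  map_comp : ∀ {i j l : Fin n} (hij : i ≤ j) (hjl : j ≤ l),
    (map hjl).comp (map hij) = map (hij.trans hjl)

attribute [instance] PersMod.acg PersMod.mod

variable {k : Type} [Field k] {n : ℕ}

/-- A morphism of persistence modules: a natural transformation. -/
@[ext]
structure PersHom (M N : PersMod k n) where
  app : ∀ i, M.V i →ₗ[k] N.V i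
  natural : ∀ {i j : Fin n} (h : i ≤ j),
    (N.map h).comp (app i) = (app j).comp (M.map h)

/-- The sum of two morphisms of persistence modules. -/
def PersHom.addH {M N : PersMod k n} (φ ψ : PersHom M N) : PersHom M N where
  app i := φ.app i + ψ.app i
  natural := by
    intro i j h
    ext x
    have h1 := LinearMap.congr_fun (φ.natural h) x
    have h2 := LinearMap.congr_fun (ψ.natural h) x
    simp only [LinearMap.comp_apply, LinearMap.add_apply] at *
    rw [map_add, h1, h2]

/-- The scalar multiple of a morphism of persistence modules. -/
def PersHom.smulH {M N : PersMod k n} (c : k) (φ : PersHom M N) : PersHom M N where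
  app i := c • φ.app i
  natural := by
    intro i j h
    ext x
    have h1 := LinearMap.congr_fun (φ.natural h) x
    simp only [LinearMap.comp_apply, LinearMap.smul_apply] at *
    rw [map_smul, h1]

/-- The zero morphism of persistence modules. -/
def PersHom.zeroH (M N : PersMod k n) : PersHom M N where
  app _ := 0
  natural := by intro i j h; ext x; simp

/-- The identity morphism of a persistence module. -/
def PersHom.idH (M : PersMod k n) : PersHom M M where
  app _ := LinearMap.id
  natural := by intro i j h; ext x; simp

/-- Composition of morphisms of persistence modules. -/
def PersHom.compH {L M N : PersMod k n} (φ : PersHom M N) (ψ : PersHom L M) :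
    PersHom L N where
  app i := (φ.app i).comp (ψ.app i)
  natural := by
    intro i j h
    ext x
    have h1 := LinearMap.congr_fun (φ.natural h) (ψ.app i x)
    have h2 := LinearMap.congr_fun (ψ.natural h) x
    simp only [LinearMap.comp_apply] at *
    rw [h1, h2]

/-- The difference of two morphisms of persistence modules. -/
def PersHom.subH {M N : PersMod k n} (φ ψ : PersHom M N) : PersHom M N where
  app i := φ.app i - ψ.app i
  natural := by
    intro i j h
    ext x
    have h1 := LinearMap.congr_fun (φ.natural h) x
    have h2 := LinearMap.congr_fun (ψ.natural h) x
    simp only [LinearMap.comp_apply, LinearMap.sub_apply] at *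
    rw [map_sub, h1, h2]

/-- The space at index `i` of the interval module `I_{[a,b)}` (1-based
interval endpoints): the field `k` if `a ≤ i < b`, zero otherwise. -/
def intervalSpace (k : Type) [Field k] (n : ℕ) (a b : ℕ) (i : Fin n) :
    Submodule k k :=
  if a ≤ (i : ℕ) + 1 ∧ (i : ℕ) + 1 < b then ⊤ else ⊥

/-- The interval persistence module `I_{[a,b)}`: it is `k` on indices
`a ≤ i < b` with identity structure maps, and `0` elsewhere. -/
def intervalMod (k : Type) [Field k] (n : ℕ) (a b : ℕ) : PersMod k n where
  V i := ↥(intervalSpace k n a b i)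
  map {i j} h :=
    { toFun := fun x =>
        ⟨if a ≤ (j : ℕ) + 1 ∧ (j : ℕ) + 1 < b then (x : k) else 0, by
          by_cases hc : a ≤ (j : ℕ) + 1 ∧ (j : ℕ) + 1 < b <;>
            simp [intervalSpace, hc]⟩
      map_add' := by
        intro x y
        apply Subtype.ext
        simp only [Submodule.coe_add]
        split_ifs <;> simp
      map_smul' := by
        intro c x
        apply Subtype.ext
        simp only [Submodule.coe_smul, RingHom.id_apply]
        split_ifs <;> simp }
  map_id := by
    intro i
    ext x
    by_cases hc : a ≤ (i : ℕ) + 1 ∧ (i : ℕ) + 1 < b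
    · simp [hc]
    · have : (x : k) = 0 := by
        have hx := x.2
        simp [intervalSpace, hc] at hx
        exact congrArg Subtype.val hx
      simp [hc, this]
  map_comp := by
    intro i j l hij hjl
    ext x
    simp only [LinearMap.comp_apply, LinearMap.coe_mk, AddHom.coe_mk]
    by_cases hl : a ≤ (l : ℕ) + 1 ∧ (l : ℕ) + 1 < b
    · by_cases hj : a ≤ (j : ℕ) + 1 ∧ (j : ℕ) + 1 < b
      · simp [hl, hj]
      · have : (x : k) = 0 := by
          have hx := x.2
          have hij' : (i : ℕ) ≤ (j : ℕ) := hij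
          have hjl' : (j : ℕ) ≤ (l : ℕ) := hjl
          obtain ⟨hl1, hl2⟩ := hl
          have hi : ¬(a ≤ (i : ℕ) + 1 ∧ (i : ℕ) + 1 < b) := by
            rintro ⟨h1, h2⟩
            exact hj ⟨by omega, by omega⟩
          simp [intervalSpace, hi] at hx
          exact congrArg Subtype.val hx
        simp [hl, hj, this]
    · simp [hl]

/-- The direct sum (finite product) of a finite family of persistence
modules. -/
def dSum {g : ℕ} (F : Fin g → PersMod k n) : PersMod k n where
  V i := ∀ j, (F j).V i
  map {i j} h := LinearMap.pi fun l => ((F l).map h).comp (LinearMap.proj l)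
  map_id := by
    intro i
    apply LinearMap.ext
    intro x
    funext l
    have := LinearMap.congr_fun ((F l).map_id i) (x l)
    simpa [LinearMap.pi_apply] using this
  map_comp := by
    intro i j l hij hjl
    apply LinearMap.ext
    intro x
    funext m
    have := LinearMap.congr_fun ((F m).map_comp hij hjl) (x m)
    simpa [LinearMap.pi_apply] using this

/-- The canonical basis vector of the `j`-th summand of a direct sum of
interval modules, at index `i` (zero if the `j`-th interval is not active
at `i`). -/
def unitVecAt {g : ℕ} (a b : Fin g → ℕ) (i : Fin n) (j : Fin g) :
    (dSum fun j' => intervalMod k n (a j') (b j')).V i :=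
  fun j' =>
    ⟨(if j' = j then (1 : k) else 0) *
        (if a j' ≤ (i : ℕ) + 1 ∧ (i : ℕ) + 1 < b j' then (1 : k) else 0), by
      by_cases hc : a j' ≤ (i : ℕ) + 1 ∧ (i : ℕ) + 1 < b j' <;>
        simp [intervalMod, intervalSpace, hc]⟩

/-- The matrix of scalars `(λ_{lj})` of a morphism `φ` between persistence
modules in barcode form, read off by evaluating `φ` at the birth index `a_j`
of the `j`-th source interval on its basis vector and taking the `l`-th
coordinate. -/
def matrixOf {g h : ℕ} (a b : Fin g → ℕ) (c d : Fin h → ℕ)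
    (hab : ∀ j, 1 ≤ a j ∧ a j < b j ∧ b j ≤ n + 1)
    (φ : PersHom (dSum fun j => intervalMod k n (a j) (b j))
      (dSum fun l => intervalMod k n (c l) (d l)))
    (l : Fin h) (j : Fin g) : k :=
  (show ↥(intervalSpace k n (c l) (d l) ⟨a j - 1, by have := hab j; omega⟩) from
    (φ.app ⟨a j - 1, by have := hab j; omega⟩
      (unitVecAt a b ⟨a j - 1, by have := hab j; omega⟩ j)) l).1

/-- The map reconstructed from the graphcode of `φ` at index `i`: the basis
vector of the `j`-th summand (when `a_j ≤ i < b_j`) is sent to the sum of the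
basis vectors of the summands `l` with `(j, l)` an edge of the graphcode and
`c_l ≤ i < d_l`. -/
def recApp {n g h : ℕ} (a b : Fin g → ℕ) (c d : Fin h → ℕ)
    (hab : ∀ j, 1 ≤ a j ∧ a j < b j ∧ b j ≤ n + 1)
    (φ : PersHom (dSum fun j => intervalMod (ZMod 2) n (a j) (b j))
      (dSum fun l => intervalMod (ZMod 2) n (c l) (d l))) (i : Fin n) :
    (dSum fun j => intervalMod (ZMod 2) n (a j) (b j)).V i →ₗ[ZMod 2]
      (dSum fun l => intervalMod (ZMod 2) n (c l) (d l)).V i where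
  toFun x l :=
    ⟨∑ j : Fin g,
        if matrixOf a b c d hab φ l j = 1 ∧
            (a j ≤ (i : ℕ) + 1 ∧ (i : ℕ) + 1 < b j) ∧
            (c l ≤ (i : ℕ) + 1 ∧ (i : ℕ) + 1 < d l) then
          (show ↥(intervalSpace (ZMod 2) n (a j) (b j) i) from x j).1
        else 0, by
      by_cases hc : c l ≤ (i : ℕ) + 1 ∧ (i : ℕ) + 1 < d l
      · simp [intervalMod, intervalSpace, hc]
      · simp only [intervalMod, intervalSpace, if_neg hc, Submodule.mem_bot]
        refine Finset.sum_eq_zero fun j _ => ?_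
        rw [if_neg]
        tauto⟩
  map_add' := by
    intro x y
    funext l
    apply Subtype.ext
    show (∑ j : Fin g, _) = (∑ j : Fin g, _) + (∑ j : Fin g, _)
    rw [← Finset.sum_add_distrib]
    exact Finset.sum_congr rfl fun j _ => by split_ifs <;> rfl
  map_smul' := by
    intro r x
    funext l
    apply Subtype.ext
    show (∑ j : Fin g, _) = r • (∑ j : Fin g, _)
    rw [Finset.smul_sum]
    refine Finset.sum_congr rfl fun j _ => ?_
    split_ifs
    · rfl
    · simp

section Aux

variable {g h : ℕ} (a b : Fin g → ℕ) (c d : Fin h → ℕ)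

lemma unitVecAt_inactive (i : Fin n) (j : Fin g)
    (hj : ¬(a j ≤ (i : ℕ) + 1 ∧ (i : ℕ) + 1 < b j)) :
    unitVecAt (k := k) a b i j = 0 := by
  funext j'
  apply Subtype.ext
  show (if j' = j then (1 : k) else 0) * _ = 0
  by_cases hjj : j' = j
  · subst hjj; simp [hj]
  · simp [hjj]

lemma map_unitVecAt (i0 i : Fin n) (h0 : i0 ≤ i) (j : Fin g)
    (hi0 : a j ≤ (i0 : ℕ) + 1 ∧ (i0 : ℕ) + 1 < b j) :
    (dSum fun j' => intervalMod k n (a j') (b j')).map h0 (unitVecAt a b i0 j)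
      = unitVecAt a b i j := by
  funext j'
  apply Subtype.ext
  show (if a j' ≤ (i : ℕ) + 1 ∧ (i : ℕ) + 1 < b j' then
      ((show ↥(intervalSpace k n (a j') (b j') i0) from unitVecAt a b i0 j j') : k) else 0) =
    ((show ↥(intervalSpace k n (a j') (b j') i) from unitVecAt a b i j j') : k)
  simp only [dSum, intervalMod, unitVecAt, LinearMap.pi_apply, LinearMap.comp_apply,
    LinearMap.proj_apply, LinearMap.coe_mk, AddHom.coe_mk]
  by_cases hjj : j' = j
  · subst hjj
    by_cases hi : a j' ≤ (i : ℕ) + 1 ∧ (i : ℕ) + 1 < b j' <;> simp [hi, hi0]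
  · by_cases hi : a j' ≤ (i : ℕ) + 1 ∧ (i : ℕ) + 1 < b j' <;> simp [hi, hjj]

lemma phi_unit {n : ℕ} (a b : Fin g → ℕ) (c d : Fin h → ℕ)
    (hab : ∀ j, 1 ≤ a j ∧ a j < b j ∧ b j ≤ n + 1)
    (φ : PersHom (dSum fun j => intervalMod (ZMod 2) n (a j) (b j))
      (dSum fun l => intervalMod (ZMod 2) n (c l) (d l)))
    (i : Fin n) (j : Fin g) (l : Fin h) :
    ((show ↥(intervalSpace (ZMod 2) n (c l) (d l) i) from
        φ.app i (unitVecAt a b i j) l) : ZMod 2) =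
      if (a j ≤ (i : ℕ) + 1 ∧ (i : ℕ) + 1 < b j) ∧
          (c l ≤ (i : ℕ) + 1 ∧ (i : ℕ) + 1 < d l) then
        matrixOf a b c d hab φ l j else 0 := by
  by_cases hj : a j ≤ (i : ℕ) + 1 ∧ (i : ℕ) + 1 < b j
  · set i0 : Fin n := ⟨a j - 1, by have := hab j; omega⟩ with hi0def
    have h0 : i0 ≤ i := by
      have := hab j
      simp only [Fin.le_def, hi0def]
      omega
    have hi0 : a j ≤ (i0 : ℕ) + 1 ∧ (i0 : ℕ) + 1 < b j := by
      have := hab j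
      constructor <;> simp [hi0def] <;> omega
    have hu := map_unitVecAt (k := ZMod 2) a b i0 i h0 j hi0
    have hnat := LinearMap.congr_fun (φ.natural h0) (unitVecAt a b i0 j)
    simp only [LinearMap.comp_apply] at hnat
    rw [hu] at hnat
    rw [← hnat]
    show (if c l ≤ (i : ℕ) + 1 ∧ (i : ℕ) + 1 < d l then
        ((show ↥(intervalSpace (ZMod 2) n (c l) (d l) i0) from
          φ.app i0 (unitVecAt a b i0 j) l) : ZMod 2) else 0) =
      if (a j ≤ (i : ℕ) + 1 ∧ (i : ℕ) + 1 < b j) ∧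
          (c l ≤ (i : ℕ) + 1 ∧ (i : ℕ) + 1 < d l) then
        matrixOf a b c d hab φ l j else 0
    by_cases hc : c l ≤ (i : ℕ) + 1 ∧ (i : ℕ) + 1 < d l
    · rw [if_pos hc, if_pos ⟨hj, hc⟩]
      rfl
    · rw [if_neg hc, if_neg (by tauto)]
  · rw [unitVecAt_inactive a b i j hj, map_zero, if_neg (by tauto)]
    rfl

lemma decomp (i : Fin n) (x : (dSum fun j => intervalMod k n (a j) (b j)).V i) :
    x = ∑ j : Fin g,
      ((show ↥(intervalSpace k n (a j) (b j) i) from x j) : k) • unitVecAt a b i j := by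
  funext j'
  apply Subtype.ext
  erw [Finset.sum_apply]
  erw [AddSubmonoidClass.coe_finset_sum]
  rw [Finset.sum_eq_single j']
  · by_cases hj : a j' ≤ (i : ℕ) + 1 ∧ (i : ℕ) + 1 < b j'
    · show ((show ↥(intervalSpace k n (a j') (b j') i) from x j') : k) =
        ((show ↥(intervalSpace k n (a j') (b j') i) from x j') : k) *
          ((if j' = j' then (1 : k) else 0) *
            (if a j' ≤ (i : ℕ) + 1 ∧ (i : ℕ) + 1 < b j' then (1 : k) else 0))
      simp [hj]
    · have hx : ((show ↥(intervalSpace k n (a j') (b j') i) from x j') : k) = 0 := by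
        have h2 := (show ↥(intervalSpace k n (a j') (b j') i) from x j').2
        simpa [intervalSpace, hj] using h2
      show ((show ↥(intervalSpace k n (a j') (b j') i) from x j') : k) =
        ((show ↥(intervalSpace k n (a j') (b j') i) from x j') : k) *
          ((if j' = j' then (1 : k) else 0) *
            (if a j' ≤ (i : ℕ) + 1 ∧ (i : ℕ) + 1 < b j' then (1 : k) else 0))
      simp [hj, hx]
  · intro j _ hjj
    show ((show ↥(intervalSpace k n (a j) (b j) i) from x j) : k) *
        ((if j' = j then (1 : k) else 0) *
          (if a j' ≤ (i : ℕ) + 1 ∧ (i : ℕ) + 1 < b j' then (1 : k) else 0)) = 0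
    simp [Ne.symm hjj]
  · intro hmem
    exact absurd (Finset.mem_univ j') hmem

lemma zmod2_cases (m : ZMod 2) : m = 0 ∨ m = 1 := by revert m; decide

end Aux

/-- Over `ℤ/2`, a morphism `φ` between persistence modules in barcode form can
be reconstructed from its graphcode together with the interval data: the
collection of maps sending the basis vector of source summand `j` (when
`a_j ≤ i < b_j`) to the sum of basis vectors of target summands `l` with
`(j, l)` an edge of the graphcode and `c_l ≤ i < d_l` is a well-defined
morphism of persistence modules, and it equals `φ`. -/
theorem graphcode_reconstruction (n g h : ℕ)
    (a b : Fin g → ℕ) (c d : Fin h → ℕ)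
    (hab : ∀ j, 1 ≤ a j ∧ a j < b j ∧ b j ≤ n + 1)
    (hcd : ∀ l, 1 ≤ c l ∧ c l < d l ∧ d l ≤ n + 1)
    (φ : PersHom (dSum fun j => intervalMod (ZMod 2) n (a j) (b j))
      (dSum fun l => intervalMod (ZMod 2) n (c l) (d l))) :
    ∃ ψ : PersHom (dSum fun j => intervalMod (ZMod 2) n (a j) (b j))
        (dSum fun l => intervalMod (ZMod 2) n (c l) (d l)),
      (∀ i, ψ.app i = recApp a b c d hab φ i) ∧ ψ = φ := by
  refine ⟨φ, fun i => ?_, rfl⟩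
  apply LinearMap.ext
  intro x
  conv_lhs => rw [decomp a b i x]
  rw [map_sum]
  funext l
  apply Subtype.ext
  erw [Finset.sum_apply, AddSubmonoidClass.coe_finset_sum]
  show _ = ∑ j : Fin g,
      if matrixOf a b c d hab φ l j = 1 ∧
          (a j ≤ (i : ℕ) + 1 ∧ (i : ℕ) + 1 < b j) ∧
          (c l ≤ (i : ℕ) + 1 ∧ (i : ℕ) + 1 < d l) then
        (show ↥(intervalSpace (ZMod 2) n (a j) (b j) i) from x j).1
      else 0
  refine Finset.sum_congr rfl fun j _ => ?_
  rw [map_smul]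
  show (((show ↥(intervalSpace (ZMod 2) n (a j) (b j) i) from x j) : ZMod 2) *
      ((show ↥(intervalSpace (ZMod 2) n (c l) (d l) i) from
        φ.app i (unitVecAt a b i j) l) : ZMod 2)) = _
  rw [phi_unit a b c d hab φ i j l]
  by_cases hcond : (a j ≤ (i : ℕ) + 1 ∧ (i : ℕ) + 1 < b j) ∧
      (c l ≤ (i : ℕ) + 1 ∧ (i : ℕ) + 1 < d l)
  · rw [if_pos hcond]
    rcases zmod2_cases (matrixOf a b c d hab φ l j) with hm | hm
    · rw [hm, mul_zero, if_neg]
      rintro ⟨h0, -⟩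
      exact absurd h0 (by decide)
    · rw [hm, mul_one, if_pos ⟨rfl, hcond.1, hcond.2⟩]
  · rw [if_neg hcond, mul_zero, if_neg (by tauto)]
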